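/- Let K be a number field possessing a prime ideal 𝔓 above 2 of residue degree 1, and let S be a finite set of prime ideals of O_K all of odd norm (in particular 𝔓 ∉ S). Then the S-unit equation λ + μ = 1 has no solution with λ, μ ∈ O_S^*. -/

import Mathlib

open NumberField Multiplicative IsDedekindDomain

/-- In a type with exactly two elements, any two nonzero elements agree. -/
lemma eq_of_ne_zero_of_card_two {M : Type*} [Zero M] (h : Nat.card M = 2)
    {a b : M} (ha : a ≠ 0) (hb : b ≠ 0) : a = b := by
  obtain ⟨y, -, hy⟩ := (Nat.card_eq_two_iff' (0 : M)).mp h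
  rw [hy a ha, hy b hb]

/-- If `P` is a nonzero prime of a Dedekind domain with residue field of
cardinality 2, then `x, y, y - x` cannot all lie in `P^n \ P^(n+1)`. -/
lemma not_all_exact_pow {R : Type*} [CommRing R] [IsDedekindDomain R]
    {P : Ideal R} [P.IsPrime] (hPbot : P ≠ ⊥) (hcard : Nat.card (R ⧸ P) = 2)
    {n : ℕ} {x y : R} (hx : x ∈ P ^ n) (hx' : x ∉ P ^ (n + 1))
    (hy : y ∈ P ^ n) (hy' : y ∉ P ^ (n + 1)) (hxy' : y - x ∉ P ^ (n + 1)) : False := by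
  obtain ⟨d, e, he, hde⟩ := Ideal.exists_mul_add_mem_pow_succ hPbot x y hx hx' hy
  have hd : d ∉ P := by
    intro hd
    apply hy'
    rw [← hde]
    refine Ideal.add_mem _ ?_ he
    rw [pow_succ]
    exact Ideal.mul_mem_mul hx hd
  have hd1 : d - 1 ∈ P := by
    have h1 : (1 : R) ∉ P := by
      simpa using (Ideal.IsPrime.ne_top ‹P.IsPrime› : P ≠ ⊤) ∘ (Ideal.eq_top_iff_one P).mpr
    have : (Ideal.Quotient.mk P) d = (Ideal.Quotient.mk P) 1 := by
      refine eq_of_ne_zero_of_card_two hcard ?_ ?_ <;>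
        rw [Ne, Ideal.Quotient.eq_zero_iff_mem] <;> assumption
    exact Ideal.Quotient.eq.mp this
  apply hxy'
  have : y - x = x * (d - 1) + e := by rw [← hde]; ring
  rw [this]
  refine Ideal.add_mem _ ?_ he
  rw [pow_succ]
  exact Ideal.mul_mem_mul hx hd1

theorem no_S_unit_equation_solution_of_degree_one_prime_above_two
    (K : Type*) [Field K] [NumberField K]
    (𝔓 : HeightOneSpectrum (𝓞 K)) (h𝔓 : Ideal.absNorm 𝔓.asIdeal = 2)
    (S : Finset (HeightOneSpectrum (𝓞 K)))
    (hS : ∀ v ∈ S, Odd (Ideal.absNorm v.asIdeal)) :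
    ¬ ∃ lam mu : K, lam ≠ 0 ∧ mu ≠ 0 ∧
      (∀ v : HeightOneSpectrum (𝓞 K), v ∉ S → v.valuation K (lam : K) = 1) ∧
      (∀ v : HeightOneSpectrum (𝓞 K), v ∉ S → v.valuation K (mu : K) = 1) ∧
      lam + mu = 1 := by
  rintro ⟨lam, mu, hlam0, hmu0, hlamS, hmuS, hsum⟩
  have h𝔓S : 𝔓 ∉ S := by
    intro h
    have := hS 𝔓 h
    rw [h𝔓] at this
    exact (by decide : ¬ Odd 2) this
  have hvlam : 𝔓.valuation K lam = 1 := hlamS 𝔓 h𝔓S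
  have hvmu : 𝔓.valuation K mu = 1 := hmuS 𝔓 h𝔓S
  -- write lam = x / y
  obtain ⟨x, y, hymem, hxy⟩ := IsFractionRing.div_surjective (A := 𝓞 K) lam
  have hyK : algebraMap (𝓞 K) K y ≠ 0 :=
    IsFractionRing.to_map_ne_zero_of_mem_nonZeroDivisors hymem
  have hy0 : y ≠ 0 := nonZeroDivisors.ne_zero hymem
  have hx0 : x ≠ 0 := by
    intro h
    apply hlam0
    rw [← hxy, h, map_zero, zero_div]
  have hmu_eq : mu = algebraMap (𝓞 K) K (y - x) / algebraMap (𝓞 K) K y := by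
    have : mu = 1 - lam := by linear_combination hsum
    rw [this, ← hxy, map_sub]
    field_simp
  have hyx0 : y - x ≠ 0 := by
    intro h
    apply hmu0
    rw [hmu_eq, h, map_zero, zero_div]
  -- valuations of x, y, y - x agree
  have hivy : 𝔓.intValuation y ≠ 0 := 𝔓.intValuation_ne_zero y hy0
  have key : ∀ a : 𝓞 K, a ≠ 0 → 𝔓.valuation K (algebraMap (𝓞 K) K a / algebraMap (𝓞 K) K y) = 1 →
      𝔓.intValuation a = 𝔓.intValuation y := by
    intro a _ hval
    rw [map_div₀, 𝔓.valuation_of_algebraMap, 𝔓.valuation_of_algebraMap,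
      div_eq_one_iff_eq hivy] at hval
    exact hval
  have hxv : 𝔓.intValuation x = 𝔓.intValuation y := key x hx0 (hxy ▸ hvlam)
  have hyxv : 𝔓.intValuation (y - x) = 𝔓.intValuation y := key (y - x) hyx0 (hmu_eq ▸ hvmu)
  -- find exponent n
  classical
  set n : ℕ := (Associates.mk 𝔓.asIdeal).count (Associates.mk (Ideal.span {y})).factors with hn
  have hyval : 𝔓.intValuation y = WithZero.exp (-(n : ℤ)) := by
    rw [HeightOneSpectrum.intValuation_apply, 𝔓.intValuationDef_if_neg hy0]
  have hmem : ∀ a : 𝓞 K, 𝔓.intValuation a = 𝔓.intValuation y →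
      a ∈ 𝔓.asIdeal ^ n ∧ a ∉ 𝔓.asIdeal ^ (n + 1) := by
    intro a ha
    constructor
    · rw [← Ideal.dvd_span_singleton, ← 𝔓.intValuation_le_pow_iff_dvd,
        ha, hyval]
    · rw [← Ideal.dvd_span_singleton, ← 𝔓.intValuation_le_pow_iff_dvd,
        ha, hyval]
      simp only [WithZero.exp_le_exp, neg_le_neg_iff, not_le]
      exact_mod_cast Nat.lt_succ_self n
  obtain ⟨hxmem, hxnot⟩ := hmem x hxv
  obtain ⟨hymem', hynot⟩ := hmem y rfl
  obtain ⟨-, hyxnot⟩ := hmem (y - x) hyxv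
  have hcard : Nat.card (𝓞 K ⧸ 𝔓.asIdeal) = 2 := by
    rw [← Submodule.cardQuot_apply, ← Ideal.absNorm_apply, h𝔓]
  exact not_all_exact_pow 𝔓.ne_bot hcard hxmem hxnot hymem' hynot hyxnot
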